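/- arXiv:1304.7456 — 3 statements merged into one kernel-verified Lean document; each statement's English description precedes it below -/
import Mathlib

section
/- Let $t \geq 1$, $S = \{2^0, 2^1, \ldots, 2^{t-1}\}$, and $\tau = 2^t - 1$. Then the number of tuples $(y_1, \ldots, y_t) \in S^t$ with $\tau \mid (y_1 + \cdots + y_t)$ is exactly $t!$ (i.e., every such tuple has sum exactly $\tau$ and is a permutation of the elements of $S$). -/
lemma sum_two_pow (n : ℕ) : ∑ i ∈ Finset.range n, 2 ^ i = 2 ^ n - 1 := by
  induction n with
  | zero => simp
  | succ n ih =>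
    rw [Finset.sum_range_succ, ih]
    have : 1 ≤ 2 ^ n := Nat.one_le_two_pow
    rw [pow_succ]; omega

lemma key (t : ℕ) (ht : 1 ≤ t) :
    ∀ n (M : Multiset ℕ), M.card = n → M ≠ 0 → (∀ e ∈ M, e < t) →
      (2 ^ t - 1) ∣ (M.map (2 ^ ·)).sum → M = Multiset.range t ∨ t < M.card := by
  intro n
  induction n using Nat.strong_induction_on with
  | _ n ih =>
    intro M hcard hne helem hdvd
    by_cases hnd : M.Nodup
    · -- nodup case
      have hsub : M.toFinset ⊆ Finset.range t := by
        intro a ha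
        simp only [Multiset.mem_toFinset] at ha
        exact Finset.mem_range.mpr (helem a ha)
      have hMval : M.toFinset.val = M := by
        rw [Multiset.toFinset_val, Multiset.dedup_eq_self.mpr hnd]
      have hsum_eq : (M.map (2 ^ ·)).sum = ∑ e ∈ M.toFinset, 2 ^ e := by
        rw [Finset.sum, hMval]
      have hle : (M.map (2 ^ ·)).sum ≤ 2 ^ t - 1 := by
        rw [hsum_eq, ← sum_two_pow]
        exact Finset.sum_le_sum_of_subset hsub
      have hpos : 0 < (M.map (2 ^ ·)).sum := by
        obtain ⟨a, ha⟩ := Multiset.exists_mem_of_ne_zero hne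
        have : (2 : ℕ) ^ a ∈ M.map (2 ^ ·) := Multiset.mem_map_of_mem _ ha
        exact lt_of_lt_of_le (pow_pos (by norm_num : (0:ℕ) < 2) a)
          (Multiset.single_le_sum (fun x _ => Nat.zero_le x) _ this)
      have heq : (M.map (2 ^ ·)).sum = 2 ^ t - 1 :=
        le_antisymm hle (Nat.le_of_dvd hpos hdvd)
      have hFeq : M.toFinset = Finset.range t := by
        by_contra hne'
        have hss : M.toFinset ⊂ Finset.range t := lt_of_le_of_ne hsub hne'
        obtain ⟨x, hx1, hx2⟩ := Finset.exists_of_ssubset hss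
        have : ∑ e ∈ M.toFinset, 2 ^ e < ∑ e ∈ Finset.range t, 2 ^ e :=
          Finset.sum_lt_sum_of_subset hss.subset hx1 hx2
            (pow_pos (by norm_num : (0:ℕ) < 2) x) (fun j _ _ => Nat.zero_le _)
        rw [← hsum_eq, heq, sum_two_pow] at this
        omega
      left
      rw [← hMval, hFeq]; rfl
    · -- duplicate case
      rw [Multiset.nodup_iff_count_le_one] at hnd
      push_neg at hnd
      obtain ⟨e, he2⟩ := hnd
      have he2' : 2 ≤ M.count e := he2
      have heM : e ∈ M := by
        rw [← Multiset.count_pos]; omega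
      have hle : (e ::ₘ e ::ₘ 0) ≤ M := by
        rw [Multiset.le_iff_count]
        intro a
        by_cases h : a = e
        · subst h; simpa using he2'
        · simp [Multiset.count_cons_of_ne h, Multiset.count_singleton, h]
      set M' := M - (e ::ₘ e ::ₘ 0) with hM'
      have hMeq : M = e ::ₘ e ::ₘ M' := by
        have h := tsub_add_cancel_of_le hle
        conv_lhs => rw [← h]
        rw [add_comm, Multiset.cons_add, Multiset.cons_add, zero_add, hM']
      have het : e < t := helem e heM
      set e' : ℕ := if e + 1 = t then 0 else e + 1 with he'
      have he't : e' < t := by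
        by_cases h : e + 1 = t <;> simp [he', h] <;> omega
      set M'' : Multiset ℕ := e' ::ₘ M' with hM''
      have hsumM : (M.map (2 ^ ·)).sum = 2 ^ (e+1) + (M'.map (2 ^ ·)).sum := by
        rw [hMeq]; simp [pow_succ]; ring
      have hsumM'' : (M''.map (2 ^ ·)).sum = 2 ^ e' + (M'.map (2 ^ ·)).sum := by
        simp [hM'']
      have hdvd'' : (2 ^ t - 1) ∣ (M''.map (2 ^ ·)).sum := by
        by_cases h : e + 1 = t
        · have h2 : e' = 0 := by simp [he', h]
          have : (M.map (2 ^ ·)).sum = (M''.map (2 ^ ·)).sum + (2 ^ t - 1) := by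
            rw [hsumM, hsumM'', h2, h]
            have : 1 ≤ 2 ^ t := Nat.one_le_two_pow
            omega
          rw [this] at hdvd
          exact (Nat.dvd_add_iff_left (dvd_refl _)).mpr hdvd
        · have h2 : e' = e + 1 := by simp [he', h]
          rw [hsumM'', h2, ← hsumM]
          exact hdvd
      have hcard'' : M''.card = n - 1 := by
        have h1 : M.card = M'.card + 2 := by rw [hMeq]; simp
        simp [hM'']
        omega
      have hn1 : 1 ≤ n := by
        rw [← hcard]
        have : 0 < M.card := Multiset.card_pos.mpr hne
        omega
      have hne'' : M'' ≠ 0 := by simp [hM'']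
      have helem'' : ∀ a ∈ M'', a < t := by
        intro a ha
        rw [hM'', Multiset.mem_cons] at ha
        rcases ha with rfl | ha
        · exact he't
        · exact helem a (by rw [hMeq]; simp [ha])
      have := ih (n - 1) (by omega) M'' hcard'' hne'' helem'' hdvd''
      right
      have hcardM : M.card = n := hcard
      rcases this with h | h
      · have : M''.card = t := by rw [h]; simp
        omega
      · omega

lemma main_aux (t : ℕ) (ht : 1 ≤ t) (y : Fin t → ℕ)
    (h1 : ∀ i, y i ∈ (Finset.range t).image (2 ^ ·))
    (h2 : (2 ^ t - 1) ∣ ∑ i, y i) :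
    ∃ e : Fin t → ℕ, (∀ i, y i = 2 ^ e i) ∧
      Multiset.map e Finset.univ.val = Multiset.range t := by
  have h1' : ∀ i, ∃ a ∈ Finset.range t, 2 ^ a = y i := by
    intro i
    exact Finset.mem_image.mp (h1 i)
  choose e he1 he2 using h1'
  refine ⟨e, fun i => (he2 i).symm, ?_⟩
  set M := Multiset.map e Finset.univ.val with hM
  have hcard : M.card = t := by simp [hM]
  have hne : M ≠ 0 := by
    intro h
    rw [h] at hcard
    simp at hcard
    omega
  have helem : ∀ a ∈ M, a < t := by
    intro a ha
    rw [hM, Multiset.mem_map] at ha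
    obtain ⟨i, _, rfl⟩ := ha
    exact Finset.mem_range.mp (he1 i)
  have hsum : ((M.map (2 ^ ·)).sum : ℕ) = ∑ i, y i := by
    rw [hM, Multiset.map_map]
    rw [show (∑ i, y i) = ∑ i, 2 ^ e i from Finset.sum_congr rfl (fun i _ => (he2 i).symm ▸ rfl)]
    rfl
  have hdvd : (2 ^ t - 1) ∣ (M.map (2 ^ ·)).sum := hsum ▸ h2
  rcases key t ht t M hcard hne helem hdvd with h | h
  · exact h
  · omega

/-- With `S = {2^0, …, 2^{t-1}}` and `τ = 2^t - 1`, the number of tuples in `S^t`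
whose sum is divisible by `τ` is exactly `t!`; moreover every such tuple sums to exactly `τ`
and is a permutation of the elements of `S`. -/
theorem stmt4 (t : ℕ) (ht : 1 ≤ t) (S : Finset ℕ) (hS : S = (Finset.range t).image (2 ^ ·)) :
    Nat.card {y : Fin t → ℕ // (∀ i, y i ∈ S) ∧ (2 ^ t - 1) ∣ ∑ i, y i} = t.factorial ∧
    ∀ y : Fin t → ℕ, (∀ i, y i ∈ S) → (2 ^ t - 1) ∣ ∑ i, y i →
      (∑ i, y i = 2 ^ t - 1 ∧ ∀ s ∈ S, ∃ i, y i = s) := by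
  subst hS
  constructor
  · -- counting part
    set P : (Fin t → ℕ) → Prop :=
      fun y => (∀ i, y i ∈ (Finset.range t).image (2 ^ ·)) ∧ (2 ^ t - 1) ∣ ∑ i, y i with hP
    have hsumperm : ∀ σ : Equiv.Perm (Fin t), ∑ i, 2 ^ (σ i : ℕ) = 2 ^ t - 1 := by
      intro σ
      rw [Equiv.sum_comp σ (fun j : Fin t => 2 ^ (j : ℕ)), Fin.sum_univ_eq_sum_range,
        sum_two_pow]
    set f : Equiv.Perm (Fin t) → {y : Fin t → ℕ // P y} := fun σ =>
      ⟨fun i => 2 ^ (σ i : ℕ),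
        fun i => Finset.mem_image.mpr ⟨(σ i : ℕ), Finset.mem_range.mpr (σ i).isLt, rfl⟩,
        by rw [hsumperm σ]⟩ with hf
    have hbij : Function.Bijective f := by
      constructor
      · intro σ σ' h
        ext i
        have := congrFun (congrArg Subtype.val h) i
        simp only [hf] at this
        exact Nat.pow_right_injective (le_refl 2) this
      · rintro ⟨y, hy1, hy2⟩
        obtain ⟨e, he, hM⟩ := main_aux t ht y hy1 hy2
        have helt : ∀ i, e i < t := by
          intro i
          have : e i ∈ Multiset.map e Finset.univ.val :=
            Multiset.mem_map_of_mem e (by simp)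
          rw [hM, Multiset.mem_range] at this
          exact this
        have hinj : Function.Injective (fun i => (⟨e i, helt i⟩ : Fin t)) := by
          intro a b hab
          have hnd : (Multiset.map e Finset.univ.val).Nodup := by
            rw [hM]; exact Multiset.nodup_range t
          have := Multiset.inj_on_of_nodup_map hnd a (by simp) b (by simp)
          exact this (by simpa [Fin.mk.injEq] using hab)
        have hbij' := Finite.injective_iff_bijective.mp hinj
        refine ⟨Equiv.ofBijective _ hbij', ?_⟩
        apply Subtype.ext
        funext i
        show 2 ^ ((Equiv.ofBijective _ hbij') i : ℕ) = y i
        rw [he i]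
        rfl
    rw [← Nat.card_eq_of_bijective f hbij, Nat.card_eq_fintype_card, Fintype.card_perm,
      Fintype.card_fin]
  · -- structural part
    intro y hy1 hy2
    obtain ⟨e, he, hM⟩ := main_aux t ht y hy1 hy2
    constructor
    · have : ∑ i, y i = ((Multiset.map e Finset.univ.val).map (2 ^ ·)).sum := by
        rw [Multiset.map_map]
        rw [show (∑ i, y i) = ∑ i, 2 ^ e i from Finset.sum_congr rfl (fun i _ => he i)]
        rfl
      rw [this, hM]
      rw [show ((Multiset.range t).map (2 ^ ·)).sum = ∑ j ∈ Finset.range t, 2 ^ j from rfl,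
        sum_two_pow]
    · intro s hs
      obtain ⟨j, hj, rfl⟩ := Finset.mem_image.mp hs
      have : j ∈ Multiset.map e Finset.univ.val := by
        rw [hM, Multiset.mem_range]
        exact Finset.mem_range.mp hj
      obtain ⟨i, _, hi⟩ := Multiset.mem_map.mp this
      exact ⟨i, by rw [he i, hi]⟩
end

section
/- Let $Q$ be a uniformly random $\tau$-th root of unity (with $\tau \geq 1$) and let $Y_1, \ldots, Y_t$ be i.i.d. random variables, each uniform on $S = \{2^0, \ldots, 2^{t-1}\}$, independent of $Q$, where $\tau = 2^t - 1$. Then $\mathbf{E}[Q^{Y_1 + \cdots + Y_t}] = t!/t^t$. -/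
lemma sum_range_two_pow (t : ℕ) : ∑ i ∈ Finset.range t, 2 ^ i = 2 ^ t - 1 := by
  induction t with
  | zero => simp
  | succ t ih =>
    rw [Finset.sum_range_succ, ih]
    have : 1 ≤ 2 ^ t := Nat.one_le_two_pow
    ring_nf
    omega

lemma core (t : ℕ) : ∀ n (s : Multiset ℕ), s.card = n → s ≠ 0 → (∀ a ∈ s, a < t) →
    (2 ^ t - 1) ∣ (s.map (2 ^ ·)).sum → t ≤ n ∧ (n = t → s.Nodup) := by
  intro n
  induction n with
  | zero =>
    intro s hc hne _ _
    exact absurd (Multiset.card_eq_zero.mp hc) hne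
  | succ n ih =>
    intro s hc hne hlt hdvd
    by_cases hnd : s.Nodup
    · -- s is nodup: the sum is between 1 and 2^t - 1 and divisible by 2^t-1, so = 2^t-1
      have ht0 : t ≠ 0 := by
        rintro rfl
        obtain ⟨a, ha⟩ := Multiset.exists_mem_of_ne_zero hne
        exact Nat.not_lt_zero a (hlt a ha)
      set F : Finset ℕ := ⟨s, hnd⟩ with hF
      have hFsub : F ⊆ Finset.range t := by
        intro a ha
        exact Finset.mem_range.mpr (hlt a ha)
      have hsum : (s.map (2 ^ ·)).sum = ∑ a ∈ F, 2 ^ a := rfl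
      have hle : ∑ a ∈ F, 2 ^ a ≤ 2 ^ t - 1 := by
        rw [← sum_range_two_pow]
        exact Finset.sum_le_sum_of_subset hFsub
      have hpos : 0 < ∑ a ∈ F, 2 ^ a := by
        obtain ⟨a, ha⟩ := Multiset.exists_mem_of_ne_zero hne
        have haF : a ∈ F := ha
        exact Finset.sum_pos' (fun i _ => Nat.zero_le _) ⟨a, haF, Nat.pow_pos (by norm_num)⟩
      have heq : ∑ a ∈ F, 2 ^ a = 2 ^ t - 1 := by
        rw [hsum] at hdvd
        exact Nat.le_antisymm hle (Nat.le_of_dvd hpos hdvd)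
      -- F must equal range t
      have hFeq : F = Finset.range t := by
        by_contra hne'
        obtain ⟨x, hxr, hxF⟩ := Finset.exists_of_ssubset (hFsub.ssubset_of_ne hne')
        have : ∑ a ∈ F, 2 ^ a < ∑ a ∈ Finset.range t, 2 ^ a :=
          Finset.sum_lt_sum_of_subset hFsub hxr hxF (Nat.pow_pos (by norm_num))
            (fun _ _ _ => Nat.zero_le _)
        rw [heq, sum_range_two_pow] at this
        omega
      have hcard : s.card = t := by
        have := congrArg Finset.card hFeq
        simpa [hF] using this
      constructor
      · omega
      · intro _; exact hnd
    · -- duplicate element a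
      obtain ⟨a, ha2⟩ : ∃ a, 2 ≤ s.count a := by
        by_contra h
        push_neg at h
        exact hnd (Multiset.nodup_iff_count_le_one.mpr fun a => by have := h a; omega)
      have haS : a ∈ s := by
        rw [← Multiset.count_pos]; omega
      have haS' : a ∈ s.erase a := by
        rw [← Multiset.count_pos, Multiset.count_erase_self]; omega
      set rest := (s.erase a).erase a with hrest
      have hs : s = a ::ₘ a ::ₘ rest := by
        rw [hrest, Multiset.cons_erase haS', Multiset.cons_erase haS]
      have hat : a < t := hlt a haS
      have hrc : rest.card = n - 1 := by
        have : s.card = rest.card + 2 := by rw [hs]; simp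
        omega
      have hn1 : 1 ≤ n := by
        have : s.card = rest.card + 2 := by rw [hs]; simp
        omega
      have hrlt : ∀ b ∈ rest, b < t := fun b hb => hlt b (by rw [hs]; simp [hb])
      have hsumS : (s.map (2 ^ ·)).sum = 2 ^ a + 2 ^ a + (rest.map (2 ^ ·)).sum := by
        rw [hs]; simp [add_assoc]
      rcases Nat.lt_or_ge (a + 1) t with hlt1 | hge1
      · -- merge to a+1
        set s' : Multiset ℕ := (a + 1) ::ₘ rest with hs'
        have hs'c : s'.card = n := by rw [hs']; simp; omega
        have hs'ne : s' ≠ 0 := by simp [hs']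
        have hs'lt : ∀ b ∈ s', b < t := by
          intro b hb
          rw [hs', Multiset.mem_cons] at hb
          rcases hb with rfl | hb
          · exact hlt1
          · exact hrlt b hb
        have hs'sum : (s'.map (2 ^ ·)).sum = (s.map (2 ^ ·)).sum := by
          rw [hs', hsumS]; simp [pow_succ]; ring
        have := ih s' hs'c hs'ne hs'lt (by rw [hs'sum]; exact hdvd)
        exact ⟨by omega, by omega⟩
      · -- a = t - 1; merge two 2^(t-1) into a 2^0, subtracting 2^t - 1
        have hat' : a + 1 = t := by omega
        set s' : Multiset ℕ := 0 ::ₘ rest with hs'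
        have hs'c : s'.card = n := by rw [hs']; simp; omega
        have hs'ne : s' ≠ 0 := by simp [hs']
        have hs'lt : ∀ b ∈ s', b < t := by
          intro b hb
          rw [hs', Multiset.mem_cons] at hb
          rcases hb with rfl | hb
          · omega
          · exact hrlt b hb
        have hsum2 : (s.map (2 ^ ·)).sum = (2 ^ t - 1) + (s'.map (2 ^ ·)).sum := by
          rw [hs', hsumS]
          have h2 : 2 ^ a + 2 ^ a = 2 ^ t := by
            rw [← hat', pow_succ]; ring
          have : 1 ≤ 2 ^ t := Nat.one_le_two_pow
          simp only [Multiset.map_cons, Multiset.sum_cons, pow_zero]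
          omega
        have hdvd' : (2 ^ t - 1) ∣ (s'.map (2 ^ ·)).sum := by
          rw [hsum2] at hdvd
          exact (Nat.dvd_add_right dvd_rfl).mp hdvd
        have := ih s' hs'c hs'ne hs'lt hdvd'
        exact ⟨by omega, by omega⟩

lemma root_sum (τ : ℕ) (hτ : τ ≠ 0) (k : ℕ) :
    ∑ j ∈ Finset.range τ, Complex.exp (2 * Real.pi * Complex.I * j / τ) ^ k
      = if τ ∣ k then (τ : ℂ) else 0 := by
  set ζ : ℂ := Complex.exp (2 * Real.pi * Complex.I / τ) with hζdef
  have hζ : IsPrimitiveRoot ζ τ := Complex.isPrimitiveRoot_exp τ hτ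
  have hexp : ∀ j : ℕ, Complex.exp (2 * Real.pi * Complex.I * j / τ) = ζ ^ j := by
    intro j
    rw [hζdef, ← Complex.exp_nat_mul]
    ring_nf
  have hterm : ∀ j : ℕ, Complex.exp (2 * Real.pi * Complex.I * j / τ) ^ k = (ζ ^ k) ^ j := by
    intro j
    rw [hexp, ← pow_mul, mul_comm, pow_mul]
  simp only [hterm]
  by_cases hd : τ ∣ k
  · have h1 : ζ ^ k = 1 := (hζ.pow_eq_one_iff_dvd k).mpr hd
    simp [h1, hd]
  · have h1 : ζ ^ k ≠ 1 := fun h => hd ((hζ.pow_eq_one_iff_dvd k).mp h)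
    have h2 : (ζ ^ k) ^ τ = 1 := by
      rw [← pow_mul, mul_comm, pow_mul, hζ.pow_eq_one, one_pow]
    rw [geom_sum_eq h1, h2, if_neg hd]
    simp

lemma dvd_iff_bijective (t : ℕ) (ht : 1 ≤ t) (a : Fin t → Fin t) :
    (2 ^ t - 1) ∣ (∑ i, 2 ^ (a i : ℕ)) ↔ Function.Bijective a := by
  constructor
  · intro hdvd
    set s : Multiset ℕ := Finset.univ.val.map (fun i => (a i : ℕ)) with hs
    have hc : s.card = t := by simp [hs]
    have hne : s ≠ 0 := by
      rw [hs]
      simp [Multiset.map_eq_zero, ← Multiset.card_eq_zero]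
      omega
    have hlt : ∀ b ∈ s, b < t := by
      intro b hb
      rw [hs, Multiset.mem_map] at hb
      obtain ⟨i, _, rfl⟩ := hb
      exact (a i).2
    have hsum : (s.map (2 ^ ·)).sum = ∑ i, 2 ^ (a i : ℕ) := by
      rw [hs, Multiset.map_map]
      rfl
    have hnd := ((core t t s hc hne hlt (by rw [hsum]; exact hdvd)).2 rfl)
    rw [hs] at hnd
    have hinj : Function.Injective a := by
      intro i j hij
      have hvinj := Multiset.inj_on_of_nodup_map hnd i (by simp) j (by simp)
        (by rw [hij])
      exact hvinj
    exact (Finite.injective_iff_bijective).mp hinj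
  · intro hbij
    have : ∑ i, 2 ^ (a i : ℕ) = ∑ j : Fin t, 2 ^ (j : ℕ) :=
      Fintype.sum_bijective a hbij _ _ (fun i => rfl)
    rw [this, Fin.sum_univ_eq_sum_range, sum_range_two_pow]

lemma card_bijective (t : ℕ) :
    (Finset.univ.filter fun a : Fin t → Fin t => Function.Bijective a).card
      = Nat.factorial t := by
  have e : {f : Fin t → Fin t // Function.Bijective f} ≃ Equiv.Perm (Fin t) :=
    { toFun := fun f => Equiv.ofBijective f f.2
      invFun := fun e => ⟨e, e.bijective⟩
      left_inv := fun f => by ext; simp [Equiv.ofBijective]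
      right_inv := fun e => by ext; simp [Equiv.ofBijective] }
  rw [← Fintype.card_subtype, Fintype.card_congr e, Fintype.card_perm, Fintype.card_fin]

/-- For `Q` a uniformly random `τ`-th root of unity (`τ = 2^t - 1`) and
`Y_1,…,Y_t` i.i.d. uniform on `S = {2^0,…,2^{t-1}}`, independent of `Q`,
`E[Q^{Y_1+⋯+Y_t}] = t!/t^t`. The expectation is written out as the average over the joint
uniform distribution on `{0,…,τ-1} × S^t`. -/
theorem stmt6 (t : ℕ) (ht : 1 ≤ t) (τ : ℕ) (hτ : τ = 2 ^ t - 1) :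
    (1 / ((τ : ℂ) * (t : ℂ) ^ t)) *
      ∑ j ∈ Finset.range τ,
        ∑ y ∈ Fintype.piFinset (fun _ : Fin t => (Finset.range t).image (2 ^ ·)),
          Complex.exp (2 * Real.pi * Complex.I * j / τ) ^ (∑ i, y i)
      = (t.factorial : ℂ) / (t : ℂ) ^ t := by
  have hτ0 : τ ≠ 0 := by
    have : 2 ≤ 2 ^ t := by
      calc 2 = 2 ^ 1 := rfl
      _ ≤ 2 ^ t := Nat.pow_le_pow_right (by norm_num) ht
    omega
  set F := Fintype.piFinset (fun _ : Fin t => (Finset.range t).image (2 ^ ·)) with hF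
  rw [Finset.sum_comm]
  have hinner : ∀ y ∈ F,
      (∑ j ∈ Finset.range τ, Complex.exp (2 * Real.pi * Complex.I * j / τ) ^ (∑ i, y i))
        = if τ ∣ (∑ i, y i) then (τ : ℂ) else 0 :=
    fun y _ => root_sum τ hτ0 (∑ i, y i)
  rw [Finset.sum_congr rfl hinner, Finset.sum_ite, Finset.sum_const, Finset.sum_const_zero,
    add_zero]
  -- card of the filter
  have hfilter : F.filter (fun y => τ ∣ (∑ i, y i))
      = (Finset.univ.filter fun a : Fin t → Fin t => Function.Bijective a).image
          (fun a i => 2 ^ (a i : ℕ)) := by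
    ext y
    simp only [Finset.mem_filter, Finset.mem_image, Finset.mem_univ, true_and, hF,
      Fintype.mem_piFinset]
    constructor
    · rintro ⟨hy, hdvd⟩
      have hch : ∀ i, ∃ b : Fin t, 2 ^ (b : ℕ) = y i := by
        intro i
        obtain ⟨b, hb, hby⟩ := hy i
        exact ⟨⟨b, Finset.mem_range.mp hb⟩, hby⟩
      choose a ha using hch
      have hy' : y = fun i => 2 ^ (a i : ℕ) := by
        funext i; exact (ha i).symm
      refine ⟨a, ?_, hy'.symm⟩
      rw [← dvd_iff_bijective t ht a, ← hτ]
      have : (∑ i, y i) = ∑ i, 2 ^ (a i : ℕ) := by rw [hy']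
      rwa [this] at hdvd
    · rintro ⟨a, hbij, rfl⟩
      constructor
      · intro i
        exact ⟨(a i : ℕ), Finset.mem_range.mpr (a i).2, rfl⟩
      · rw [hτ]
        exact (dvd_iff_bijective t ht a).mpr hbij
  rw [hfilter, Finset.card_image_of_injective _ ?hinj, card_bijective]
  case hinj =>
    intro a b hab
    funext i
    have : (2 : ℕ) ^ (a i : ℕ) = 2 ^ (b i : ℕ) := congrFun hab i
    have := Nat.pow_right_injective (le_refl 2) this
    exact Fin.ext this
  -- arithmetic
  have htC : ((t : ℂ)) ≠ 0 := Nat.cast_ne_zero.mpr (by omega)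
  have hτC : ((τ : ℂ)) ≠ 0 := Nat.cast_ne_zero.mpr hτ0
  rw [nsmul_eq_mul]
  field_simp
end

section
/- Let $Q$ be a uniformly random $\tau$-th root of unity with $\tau = 2^t - 1$, $t \geq 1$. Let $t' < t$, let $Y_1, \ldots, Y_{t'}$ be random variables taking values in $S = \{2^0, \ldots, 2^{t-1}\}$, independent of $Q$, and let $f : \{1,\ldots,t\} \to \{1,\ldots,t'\}$ be any function. Then $\mathbf{E}[Q^{\sum_{c=1}^t Y_{f(c)}}] = 0$. -/
lemma sum_pow_two (m : ℕ) : ∑ i ∈ Finset.range m, 2 ^ i = 2 ^ m - 1 := by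
  induction m with
  | zero => simp
  | succ k ih =>
    rw [Finset.sum_range_succ, ih]
    have h1 : 1 ≤ 2 ^ k := Nat.one_le_two_pow
    have h2 : 2 ^ (k + 1) = 2 * 2 ^ k := by ring
    omega

lemma key_s7 (t : ℕ) (ht : 2 ≤ t) :
    ∀ n (x : ℕ → ℕ), (∑ i ∈ Finset.range t, x i) = n →
    (2 ^ t - 1) ∣ (∑ i ∈ Finset.range t, x i * 2 ^ i) →
    (∑ i ∈ Finset.range t, x i * 2 ^ i) = 0 ∨
      (t ≤ n ∧ (n = t → ∀ i ∈ Finset.range t, x i = 1)) := by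
  intro n
  induction n using Nat.strong_induction_on with
  | _ n IH =>
    intro x hsum hdvd
    by_cases hall : ∀ j ∈ Finset.range t, x j ≤ 1
    · -- base case : all digits ≤ 1
      have hle : (∑ i ∈ Finset.range t, x i * 2 ^ i) ≤ ∑ i ∈ Finset.range t, 2 ^ i := by
        apply Finset.sum_le_sum
        intro i hi
        calc x i * 2 ^ i ≤ 1 * 2 ^ i := Nat.mul_le_mul_right _ (hall i hi)
        _ = 2 ^ i := one_mul _
      rw [sum_pow_two] at hle
      rcases Nat.eq_zero_or_pos (∑ i ∈ Finset.range t, x i * 2 ^ i) with h0 | hpos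
      · exact Or.inl h0
      · have hge := Nat.le_of_dvd hpos hdvd
        have heq : (∑ i ∈ Finset.range t, x i * 2 ^ i) = ∑ i ∈ Finset.range t, 2 ^ i := by
          rw [sum_pow_two]; omega
        have hterm : ∀ i ∈ Finset.range t, x i * 2 ^ i = 2 ^ i := by
          rw [← Finset.sum_eq_sum_iff_of_le (fun i hi => by
            calc x i * 2 ^ i ≤ 1 * 2 ^ i := Nat.mul_le_mul_right _ (hall i hi)
            _ = 2 ^ i := one_mul _)]
          exact heq
        have hone : ∀ i ∈ Finset.range t, x i = 1 := by
          intro i hi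
          have := hterm i hi
          have h2 : (0:ℕ) < 2 ^ i := Nat.pow_pos (by norm_num)
          nlinarith [Nat.eq_of_mul_eq_mul_right h2 (by linarith [this] : x i * 2 ^ i = 1 * 2 ^ i)]
        have hn : n = t := by
          rw [← hsum, Finset.sum_congr rfl hone, Finset.sum_const, Finset.card_range, smul_eq_mul, mul_one]
        exact Or.inr ⟨hn.ge, fun _ => hone⟩
    · -- step case : some digit ≥ 2, perform a carry
      push_neg at hall
      obtain ⟨j, hj, hxj⟩ := hall
      rw [Finset.mem_range] at hj
      have hxj2 : 2 ≤ x j := hxj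
      set j' : ℕ := (j + 1) % t with hj'def
      have hj't : j' < t := Nat.mod_lt _ (by omega)
      have hjj' : j' ≠ j := by
        rcases Nat.lt_or_ge (j+1) t with hlt | hge
        · rw [hj'def, Nat.mod_eq_of_lt hlt]; omega
        · have : j + 1 = t := by omega
          rw [hj'def, this, Nat.mod_self]; omega
      set x' : ℕ → ℕ := Function.update (Function.update x j (x j - 2)) j' (x j' + 1) with hx'
      -- sums over range t of updated functions
      have hmemj : j ∈ Finset.range t := Finset.mem_range.mpr hj
      have hmemj' : j' ∈ Finset.range t := Finset.mem_range.mpr hj't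
      have hsum' : ∑ i ∈ Finset.range t, x' i = n - 1 := by
        rw [hx']
        rw [Finset.sum_update_of_mem hmemj']
        have hmemj2 : j ∈ Finset.range t \ {j'} := by
          rw [Finset.mem_sdiff, Finset.mem_singleton]; exact ⟨hmemj, fun hh => hjj' hh.symm⟩
        rw [Finset.sum_eq_add_sum_sdiff_singleton_of_mem hmemj2 (fun i => Function.update x j (x j - 2) i)]
        rw [Function.update_self]
        have : ∀ i ∈ (Finset.range t \ {j'}) \ {j}, Function.update x j (x j - 2) i = x i := by
          intro i hi
          rw [Finset.mem_sdiff, Finset.mem_singleton] at hi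
          exact Function.update_of_ne hi.2 _ _
        rw [Finset.sum_congr rfl this]
        have horig : ∑ i ∈ Finset.range t, x i =
            x j' + (x j + ∑ i ∈ (Finset.range t \ {j'}) \ {j}, x i) := by
          rw [Finset.sum_eq_add_sum_sdiff_singleton_of_mem hmemj' (fun i => x i),
            Finset.sum_eq_add_sum_sdiff_singleton_of_mem hmemj2 (fun i => x i)]
        rw [hsum] at horig
        have hee : ((Finset.range t \ {j'}) \ {j}).sum x = ∑ i ∈ (Finset.range t \ {j'}) \ {j}, x i := rfl
        omega
      have hval : ∑ i ∈ Finset.range t, x' i * 2 ^ i + 2 * 2 ^ j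
          = (∑ i ∈ Finset.range t, x i * 2 ^ i) + 2 ^ j' := by
        rw [hx']
        rw [Finset.sum_eq_add_sum_sdiff_singleton_of_mem hmemj' (fun i => Function.update (Function.update x j (x j - 2)) j' (x j' + 1) i * 2 ^ i)]
        have hmemj2 : j ∈ Finset.range t \ {j'} := by
          rw [Finset.mem_sdiff, Finset.mem_singleton]; exact ⟨hmemj, fun hh => hjj' hh.symm⟩
        rw [Finset.sum_eq_add_sum_sdiff_singleton_of_mem hmemj2]
        rw [Function.update_self]
        rw [Function.update_of_ne (Ne.symm hjj') _ _, Function.update_self]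
        have hcong : ∀ i ∈ (Finset.range t \ {j'}) \ {j},
            Function.update (Function.update x j (x j - 2)) j' (x j' + 1) i * 2 ^ i = x i * 2 ^ i := by
          intro i hi
          rw [Finset.mem_sdiff, Finset.mem_singleton] at hi
          rw [Finset.mem_sdiff, Finset.mem_singleton] at hi
          rw [Function.update_of_ne hi.1.2, Function.update_of_ne hi.2]
        rw [Finset.sum_congr rfl hcong]
        have horig : ∑ i ∈ Finset.range t, x i * 2 ^ i =
            x j' * 2 ^ j' + (x j * 2 ^ j + ∑ i ∈ (Finset.range t \ {j'}) \ {j}, x i * 2 ^ i) := by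
          rw [Finset.sum_eq_add_sum_sdiff_singleton_of_mem hmemj' (fun i => x i * 2 ^ i),
            Finset.sum_eq_add_sum_sdiff_singleton_of_mem hmemj2 (fun i => x i * 2 ^ i)]
        rw [horig]
        have hxx : x j - 2 + 2 = x j := by omega
        have hkey : (x j - 2) * 2 ^ j + 2 * 2 ^ j = x j * 2 ^ j := by
          calc (x j - 2) * 2 ^ j + 2 * 2 ^ j = (x j - 2 + 2) * 2 ^ j := by ring
          _ = x j * 2 ^ j := by rw [hxx]
        have hee : ((Finset.range t \ {j'}) \ {j}).sum (fun i => x i * 2 ^ i) = ∑ i ∈ (Finset.range t \ {j'}) \ {j}, x i * 2 ^ i := rfl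
        ring_nf
        ring_nf at hkey
        omega
      have hxjle : x j ≤ n := by
        rw [← hsum]; exact Finset.single_le_sum (fun i _ => Nat.zero_le _) hmemj
      have hn2 : 2 ≤ n := le_trans hxj2 hxjle
      have hklow : x j * 2 ^ j ≤ ∑ i ∈ Finset.range t, x i * 2 ^ i :=
        Finset.single_le_sum (f := fun i => x i * 2 ^ i) (fun i _ => Nat.zero_le _) hmemj
      rcases Nat.lt_or_ge (j + 1) t with hlt | hge
      · -- no wrap-around carry
        have hj'eq : j' = j + 1 := by rw [hj'def, Nat.mod_eq_of_lt hlt]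
        have hpow : (2:ℕ) ^ j' = 2 * 2 ^ j := by rw [hj'eq]; ring
        have hkeq : ∑ i ∈ Finset.range t, x' i * 2 ^ i = ∑ i ∈ Finset.range t, x i * 2 ^ i := by
          omega
        rcases IH (n-1) (by omega) x' hsum' (by rw [hkeq]; exact hdvd) with h0 | ⟨hle2, _⟩
        · exact Or.inl (by omega)
        · exact Or.inr ⟨by omega, fun hn => absurd hn (by omega)⟩
      · -- wrap-around carry
        have hjt : j + 1 = t := by omega
        have hj'eq : j' = 0 := by rw [hj'def, hjt, Nat.mod_self]
        have hpow : (2:ℕ) ^ j' = 1 := by rw [hj'eq]; rfl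
        have hpow2 : 2 * (2:ℕ) ^ j = 2 ^ t := by rw [← hjt]; ring
        have h2t : 2 * 2 ^ j ≤ x j * 2 ^ j := Nat.mul_le_mul_right _ hxj2
        have h1 : (1:ℕ) ≤ 2 ^ t := Nat.one_le_two_pow
        have hkeq : ∑ i ∈ Finset.range t, x' i * 2 ^ i
            = ∑ i ∈ Finset.range t, x i * 2 ^ i - (2 ^ t - 1) := by omega
        have hdvd' : 2 ^ t - 1 ∣ ∑ i ∈ Finset.range t, x' i * 2 ^ i := by
          rw [hkeq]; exact Nat.dvd_sub hdvd dvd_rfl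
        rcases IH (n-1) (by omega) x' hsum' hdvd' with h0 | ⟨hle2, _⟩
        · exfalso; omega
        · exact Or.inr ⟨by omega, fun hn => absurd hn (by omega)⟩


/-- For `Q` a uniformly random `τ`-th root of unity with `τ = 2^t - 1`, `t' < t`,
random variables `Y_1,…,Y_{t'}` taking values in `S = {2^0,…,2^{t-1}}` (with an arbitrary
distribution `p`), independent of `Q`, and any `f : {1,…,t} → {1,…,t'}`, we have
`E[Q^{∑_c Y_{f(c)}}] = 0`. The expectation is written out over the joint distribution. -/
theorem stmt7 (t t' : ℕ) (h : t' < t) (τ : ℕ) (hτ : τ = 2 ^ t - 1)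
    (p : (Fin t' → ℕ) → ℝ) (hp0 : ∀ y, 0 ≤ p y)
    (hp1 : ∑ y ∈ Fintype.piFinset (fun _ : Fin t' => (Finset.range t).image (2 ^ ·)), p y = 1)
    (f : Fin t → Fin t') :
    (1 / (τ : ℂ)) *
      ∑ y ∈ Fintype.piFinset (fun _ : Fin t' => (Finset.range t).image (2 ^ ·)),
        ∑ j ∈ Finset.range τ,
          (p y : ℂ) * Complex.exp (2 * Real.pi * Complex.I * j / τ) ^ (∑ c, y (f c))
      = 0 := by
  rcases Nat.eq_zero_or_pos t' with h0 | h0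
  · subst h0
    exact (f ⟨0, by omega⟩).elim0
  have ht2 : 2 ≤ t := by omega
  have h4 : (4:ℕ) ≤ 2 ^ t := by
    calc (4:ℕ) = 2 ^ 2 := rfl
    _ ≤ 2 ^ t := Nat.pow_le_pow_right (by norm_num) ht2
  have hτpos : 3 ≤ τ := by omega
  have hτ0 : (τ:ℂ) ≠ 0 := Nat.cast_ne_zero.mpr (by omega)
  rw [mul_eq_zero]
  right
  apply Finset.sum_eq_zero
  intro y hy
  set K : ℕ := ∑ c, y (f c) with hK
  -- extract exponents
  have hy' : ∀ i, y i ∈ (Finset.range t).image (2 ^ ·) := Fintype.mem_piFinset.mp hy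
  have hy'' : ∀ i : Fin t', ∃ e, e ∈ Finset.range t ∧ 2 ^ e = y i := by
    intro i; exact Finset.mem_image.mp (hy' i)
  choose a ha1 ha2 using hy''
  have ha1' : ∀ i, a i < t := fun i => Finset.mem_range.mp (ha1 i)
  set x : ℕ → ℕ := fun i => (Finset.univ.filter (fun c : Fin t => a (f c) = i)).card with hx
  have hmaps : ∀ c : Fin t, c ∈ (Finset.univ : Finset (Fin t)) → a (f c) ∈ Finset.range t :=
    fun c _ => ha1 (f c)
  have hKsum : K = ∑ i ∈ Finset.range t, x i * 2 ^ i := by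
    rw [hK]
    have h1 : ∀ c : Fin t, y (f c) = 2 ^ (a (f c)) := fun c => (ha2 (f c)).symm
    rw [Finset.sum_congr rfl (fun c _ => h1 c)]
    rw [← Finset.sum_fiberwise_of_maps_to hmaps (fun c => 2 ^ (a (f c)))]
    apply Finset.sum_congr rfl
    intro i hi
    have : ∀ c ∈ Finset.univ.filter (fun c : Fin t => a (f c) = i), 2 ^ (a (f c)) = 2 ^ i := by
      intro c hc
      rw [(Finset.mem_filter.mp hc).2]
    rw [Finset.sum_congr rfl this, Finset.sum_const, smul_eq_mul, mul_comm]
  have hxsum : ∑ i ∈ Finset.range t, x i = t := by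
    have := Finset.card_eq_sum_card_fiberwise hmaps
    simp only [Finset.card_univ, Fintype.card_fin] at this
    rw [hx]
    exact this.symm
  have hzero : ∃ j ∈ Finset.range t, x j = 0 := by
    by_contra hcon
    push_neg at hcon
    have hsub : Finset.range t ⊆ Finset.image a Finset.univ := by
      intro i hi
      have := hcon i hi
      rw [hx] at this
      obtain ⟨c, hc⟩ := Finset.card_ne_zero.mp this
      rw [Finset.mem_filter] at hc
      exact Finset.mem_image.mpr ⟨f c, Finset.mem_univ _, hc.2⟩
    have := Finset.card_le_card hsub
    rw [Finset.card_range] at this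
    have h2 := Finset.card_image_le (f := a) (s := Finset.univ)
    simp only [Finset.card_univ, Fintype.card_fin] at h2
    omega
  have hnotdvd : ¬ (τ ∣ K) := by
    intro hdvd
    rw [hτ] at hdvd
    rcases key_s7 t ht2 t x hxsum (by rw [← hKsum]; exact hdvd) with hK0 | ⟨_, hall⟩
    · rw [← hKsum] at hK0
      have : ∀ c : Fin t, y (f c) = 2 ^ (a (f c)) := fun c => (ha2 (f c)).symm
      have hpos : 0 < K := by
        rw [hK]
        apply Finset.sum_pos
        · intro c _
          rw [this c]
          exact Nat.pow_pos (by norm_num)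
        · exact ⟨⟨0, by omega⟩, Finset.mem_univ _⟩
      omega
    · obtain ⟨j, hj, hxj⟩ := hzero
      rw [hall rfl j hj] at hxj
      exact one_ne_zero hxj
  -- geometric sum argument
  rw [← Finset.mul_sum]
  set z : ℂ := Complex.exp (2 * Real.pi * Complex.I * K / τ) with hz
  have hterm : ∀ j ∈ Finset.range τ,
      Complex.exp (2 * Real.pi * Complex.I * j / τ) ^ K = z ^ j := by
    intro j _
    rw [hz, ← Complex.exp_nat_mul, ← Complex.exp_nat_mul]
    congr 1
    field_simp
  rw [Finset.sum_congr rfl hterm]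
  have hz1 : z ≠ 1 := by
    intro hz1
    rw [hz, Complex.exp_eq_one_iff] at hz1
    obtain ⟨m, hm⟩ := hz1
    have hπ : (Real.pi : ℂ) ≠ 0 := by exact_mod_cast Real.pi_ne_zero
    have h2πI : (2 * (Real.pi:ℂ) * Complex.I) ≠ 0 :=
      mul_ne_zero (mul_ne_zero two_ne_zero hπ) Complex.I_ne_zero
    rw [div_eq_iff hτ0] at hm
    have h2 : (2 * (Real.pi:ℂ) * Complex.I) * (K:ℂ)
        = (2 * (Real.pi:ℂ) * Complex.I) * ((m:ℂ) * τ) := by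
      linear_combination hm
    have hKm : (K : ℂ) = (m:ℂ) * τ := mul_left_cancel₀ h2πI h2
    have hKm' : (K : ℤ) = m * τ := by exact_mod_cast hKm
    exact hnotdvd (Int.natCast_dvd_natCast.mp ⟨m, by rw [hKm']; ring⟩)
  show (p y : ℂ) * ∑ i ∈ Finset.range τ, z ^ i = 0
  rw [geom_sum_eq hz1]
  have hzτ : z ^ τ = 1 := by
    rw [hz, ← Complex.exp_nat_mul]
    have : (τ : ℂ) * (2 * Real.pi * Complex.I * K / τ) = K * (2 * Real.pi * Complex.I) := by
      field_simp
    rw [this, Complex.exp_nat_mul, Complex.exp_two_pi_mul_I, one_pow]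
  rw [hzτ]
  simp
end
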